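/- In the case γ_n = (−i)^n, λ = i/2 and ω = 0, the generalized Malmquist–Takenaka functions φ_n(x) = (−i)^n·√(1/(2π))·(i/2−x)^{n+δ}/(−i/2−x)^{n+δ+1} (for a fixed δ ∈ ℝ, complex powers via e^{i(n+δ)H(x)} with H(x) = 2·arctan(2x) times the appropriate modulus factors) satisfy the differentiation relation φ_n'(x) = −(n+δ)·φ_{n−1}(x) + (2(n+δ)+1)·i·φ_n(x) + (n+δ+1)·φ_{n+1}(x) for all n ∈ ℤ. -/

import Mathlib

open Complex

/-- Generalized Malmquist–Takenaka functions with parameter `δ`, for `λ = i/2`, `ω = 0`,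
`γ_n = (-i)^n`, written via `H(x) = 2 arctan(2x)`. -/
noncomputable def genMT (δ : ℝ) (n : ℤ) (x : ℝ) : ℂ :=
  (Real.sqrt (2 / Real.pi) : ℂ) * I ^ n *
    Complex.exp (I * ((n : ℂ) + δ) * (2 * Real.arctan (2 * x))) / (1 - 2 * I * x)


lemma exp_I_two_arctan (t : ℝ) :
    Complex.exp (I * (2 * Real.arctan t)) = (1 + t * I) / (1 - t * I) := by
  have hne : (1 - (t:ℂ) * I) ≠ 0 := by
    intro h
    have := congrArg Complex.re h
    simp at this
  have h1 : ((1:ℝ) + t^2) ≠ 0 := by positivity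
  have hc : Real.cos (2 * Real.arctan t) = (1 - t^2) / (1 + t^2) := by
    rw [Real.cos_two_mul, Real.cos_arctan]
    rw [div_pow, one_pow, Real.sq_sqrt (by positivity)]
    field_simp
    ring
  have hs : Real.sin (2 * Real.arctan t) = 2 * t / (1 + t^2) := by
    rw [Real.sin_two_mul, Real.sin_arctan, Real.cos_arctan]
    field_simp [Real.sq_sqrt, Real.sqrt_ne_zero']
    rw [Real.sq_sqrt (by positivity)]
  have : I * (2 * (Real.arctan t : ℂ)) = ((2 * Real.arctan t : ℝ) : ℂ) * I := by
    push_cast; ring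
  rw [this, Complex.exp_mul_I]
  rw [← Complex.ofReal_cos, ← Complex.ofReal_sin, hc, hs]
  have h1' : ((1:ℂ) + t^2) ≠ 0 := by exact_mod_cast (by exact_mod_cast h1 : ((1+t^2:ℝ):ℂ) ≠ 0)
  push_cast
  field_simp
  ring_nf
  simp [Complex.I_sq]
  ring


set_option maxHeartbeats 1000000 in
theorem genMT_hasDerivAt (δ : ℝ) (n : ℤ) (x : ℝ) :
    HasDerivAt (genMT δ n)
      (-((n : ℂ) + δ) * genMT δ (n - 1) x +
        (2 * ((n : ℂ) + δ) + 1) * I * genMT δ n x +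
        ((n : ℂ) + δ + 1) * genMT δ (n + 1) x) x := by
  have hu : (1 - 2 * I * (x:ℂ)) ≠ 0 := by
    intro h
    have := congrArg Complex.re h
    simp at this
  have hv : (1 + 2*(x:ℂ) * I) ≠ 0 := by
    intro h
    have := congrArg Complex.re h
    simp at this
  have h1 : HasDerivAt (fun y : ℝ => Real.arctan (2*y)) (2 * (1+(2*x)^2)⁻¹) x := by
    have := (Real.hasDerivAt_arctan (2*x)).comp x ((hasDerivAt_id x).const_mul 2)
    simpa [Function.comp_def, mul_comm, div_eq_mul_inv] using this
  have hE : HasDerivAt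
      (fun y : ℝ => Complex.exp (I * ((n : ℂ) + δ) * (2 * Real.arctan (2 * y))))
      (Complex.exp (I * ((n : ℂ) + δ) * (2 * Real.arctan (2 * x))) *
        (I * ((n : ℂ) + δ) * (2 * ((2 * (1+(2*x)^2)⁻¹ : ℝ) : ℂ)))) x := by
    have h2 := ((h1.ofReal_comp.const_mul (2:ℂ)).const_mul (I * ((n : ℂ) + δ))).cexp
    convert h2 using 2 <;> push_cast <;> ring
  have hD : HasDerivAt (fun y : ℝ => (1 : ℂ) - 2 * I * y) (-(2 * I)) x := by
    have h3 := (((hasDerivAt_id x).ofReal_comp).const_mul (2*I)).const_sub 1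
    simpa using h3
  have key := ((hE.const_mul ((Real.sqrt (2 / Real.pi) : ℂ) * I ^ n)).div hD hu)
  refine HasDerivAt.congr_deriv (f := genMT δ n) key ?_
  symm
  simp only [genMT]
  push_cast [-Complex.ofReal_arctan]
  have hIe : Complex.exp (I * (2 * ((Real.arctan (2*x) : ℝ) : ℂ))) = (1 + 2*(x:ℂ)*I) / (1 - 2*I*(x:ℂ)) := by
    rw [exp_I_two_arctan (2*x)]
    push_cast
    ring_nf
  have e1 : I * (((n:ℂ) - 1) + δ) * (2 * ((Real.arctan (2*x):ℝ):ℂ))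
      = I * ((n:ℂ) + δ) * (2 * ((Real.arctan (2*x):ℝ):ℂ)) - I * (2 * ((Real.arctan (2*x):ℝ):ℂ)) := by ring
  have e2 : I * (((n:ℂ) + 1) + δ) * (2 * ((Real.arctan (2*x):ℝ):ℂ))
      = I * ((n:ℂ) + δ) * (2 * ((Real.arctan (2*x):ℝ):ℂ)) + I * (2 * ((Real.arctan (2*x):ℝ):ℂ)) := by ring
  rw [e1, e2, Complex.exp_sub, Complex.exp_add, hIe,
    zpow_sub₀ I_ne_zero, zpow_add₀ I_ne_zero, zpow_one]
  have hEne : Complex.exp (I * ((n:ℂ) + δ) * (2 * ((Real.arctan (2*x):ℝ):ℂ))) ≠ 0 := Complex.exp_ne_zero _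
  have h4 : ((1 + (2*x)^2 : ℝ) : ℂ) ≠ 0 := by
    exact_mod_cast (by positivity : ((1:ℝ) + (2*x)^2) ≠ 0)
  push_cast [-Complex.ofReal_arctan] at h4 ⊢
  have hfac : (1:ℂ) + (2*x)^2 = (1 - 2*I*x) * (1 + 2*x*I) := by
    linear_combination (4*(x:ℂ)^2) * Complex.I_sq
  generalize Complex.exp (I * ((n:ℂ) + δ) * (2 * ((Real.arctan (2*x):ℝ):ℂ))) = E at hEne ⊢
  generalize (I:ℂ) ^ n = J
  generalize ((Real.sqrt (2/Real.pi) : ℝ) : ℂ) = S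
  rw [hfac]
  set u : ℂ := 1 - 2*I*x with hu'
  set v : ℂ := 1 + 2*x*I with hv'
  field_simp
  rw [hu', hv']
  ring_nf
  rw [Complex.I_sq, show I ^ 3 = -I by rw [pow_succ, Complex.I_sq]; ring,
    show I ^ 4 = 1 by rw [show (4:ℕ) = 2 * 2 from rfl, pow_mul, Complex.I_sq]; norm_num]
  ring
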